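/- Let G be an n-isobicyclic group and let p be a prime dividing n, with p^e the exact power of p dividing n (p^e ∣ n and p^(e+1) ∤ n). Then every Sylow p-subgroup P of G is p^e-isobicyclic; that is, there exist elements a, b ∈ P of order p^e with P = ⟨a⟩⟨b⟩, ⟨a⟩ ∩ ⟨b⟩ = 1, and an automorphism of P transposing a and b. -/

import Mathlib

open scoped Pointwise

private lemma pair_mul_injective {H : Type*} [Group H] (u v : H)
    (huv : Subgroup.zpowers u ⊓ Subgroup.zpowers v = ⊥) :
    Function.Injective
      (fun w : Subgroup.zpowers u × Subgroup.zpowers v => ((w.1 : H) * (w.2 : H))) := by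
  rintro ⟨⟨c, hc⟩, ⟨d, hd⟩⟩ ⟨⟨c', hc'⟩, ⟨d', hd'⟩⟩ h
  simp only at h
  have h2 : c'⁻¹ * c = d' * d⁻¹ := by
    apply mul_right_cancel (b := d)
    rw [mul_assoc, h]
    group
  have key : c'⁻¹ * c ∈ Subgroup.zpowers u ⊓ Subgroup.zpowers v := by
    refine Subgroup.mem_inf.mpr ⟨mul_mem (inv_mem hc') hc, ?_⟩
    rw [h2]; exact mul_mem hd' (inv_mem hd)
  rw [huv, Subgroup.mem_bot] at key
  have hcc : c = c' := by
    have := key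
    rwa [inv_mul_eq_one, eq_comm] at this
  have hdd : d = d' := by
    have := h2 ▸ key
    rw [mul_inv_eq_one] at this
    exact this.symm
  subst hcc; subst hdd
  rfl

private lemma aux_main {G : Type*} [Group G] [Finite G] {p e : ℕ}
    (P : Subgroup G) (hcard : Nat.card P = p ^ e * p ^ e)
    {a0 b0 : G} (ha : a0 ∈ P) (hb : b0 ∈ P)
    (hoa : orderOf a0 = p ^ e) (hob : orderOf b0 = p ^ e)
    (hinf : Subgroup.zpowers a0 ⊓ Subgroup.zpowers b0 = ⊥)
    (α : G ≃* G) (hab : α a0 = b0) (hba : α b0 = a0) :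
    ∃ a b : P, orderOf a = p ^ e ∧ orderOf b = p ^ e ∧
      (↑(Subgroup.zpowers a) * ↑(Subgroup.zpowers b) : Set P) = Set.univ ∧
      Subgroup.zpowers a ⊓ Subgroup.zpowers b = ⊥ ∧
      ∃ β : P ≃* P, β a = b ∧ β b = a := by
  set a : P := ⟨a0, ha⟩ with ha'
  set b : P := ⟨b0, hb⟩ with hb'
  have hoa' : orderOf a = p ^ e := by rw [ha', Subgroup.orderOf_mk, hoa]
  have hob' : orderOf b = p ^ e := by rw [hb', Subgroup.orderOf_mk, hob]
  have hinf' : Subgroup.zpowers a ⊓ Subgroup.zpowers b = ⊥ := by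
    rw [eq_bot_iff]
    intro w hw
    obtain ⟨hw1, hw2⟩ := Subgroup.mem_inf.mp hw
    obtain ⟨m, hm⟩ := hw1
    obtain ⟨k, hk⟩ := hw2
    have hmem : (w : G) ∈ Subgroup.zpowers a0 ⊓ Subgroup.zpowers b0 := by
      refine Subgroup.mem_inf.mpr ⟨⟨m, ?_⟩, ⟨k, ?_⟩⟩
      · rw [← hm]; norm_cast
      · rw [← hk]; norm_cast
    rw [hinf, Subgroup.mem_bot] at hmem
    simpa [Subgroup.mem_bot] using Subtype.ext hmem
  -- bijectivity of the multiplication map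
  have hinj := pair_mul_injective a b hinf'
  have hcards : Nat.card (Subgroup.zpowers a × Subgroup.zpowers b) = Nat.card P := by
    rw [Nat.card_prod, Nat.card_zpowers, Nat.card_zpowers, hoa', hob', hcard]
  have hbij : Function.Bijective
      (fun w : Subgroup.zpowers a × Subgroup.zpowers b => ((w.1 : P) * (w.2 : P))) :=
    (Nat.bijective_iff_injective_and_card _).mpr ⟨hinj, hcards⟩
  have hsurj := hbij.surjective
  have hdecomp : ∀ w : P, ∃ m k : ℤ, (w : G) = a0 ^ m * b0 ^ k := by
    intro w
    obtain ⟨⟨u, v⟩, huv⟩ := hsurj w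
    obtain ⟨m, hm⟩ := u.2
    obtain ⟨k, hk⟩ := v.2
    refine ⟨m, k, ?_⟩
    rw [← huv]
    push_cast [← hm, ← hk]
    norm_cast
  refine ⟨a, b, hoa', hob', ?_, hinf', ?_⟩
  · apply Set.eq_univ_iff_forall.mpr
    intro w
    obtain ⟨⟨u, v⟩, huv⟩ := hsurj w
    exact Set.mem_mul.mpr ⟨u.1, u.2, v.1, v.2, huv⟩
  · -- the automorphism
    have hle : P.map α.toMonoidHom ≤ P := by
      rintro g ⟨u, hu, rfl⟩
      obtain ⟨m, k, hmk⟩ := hdecomp ⟨u, hu⟩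
      simp only [Subgroup.coe_mk] at hmk
      show α u ∈ P
      rw [hmk, map_mul, map_zpow, map_zpow, hab, hba]
      exact mul_mem (Subgroup.zpow_mem P hb m) (Subgroup.zpow_mem P ha k)
    have hcard_map : Nat.card P ≤ Nat.card (P.map α.toMonoidHom) :=
      le_of_eq (Nat.card_congr (P.equivMapOfInjective α.toMonoidHom α.injective).toEquiv)
    have heq : P.map α.toMonoidHom = P := Subgroup.eq_of_le_of_card_ge hle hcard_map
    refine ⟨(α.subgroupMap P).trans (MulEquiv.subgroupCongr heq), ?_, ?_⟩
    · apply Subtype.ext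
      rw [MulEquiv.trans_apply]
      show α a0 = b0
      exact hab
    · apply Subtype.ext
      rw [MulEquiv.trans_apply]
      show α b0 = a0
      exact hba

/-- If `G` is `n`-isobicyclic and `p^e` is the exact power of the prime `p`
dividing `n`, then every Sylow `p`-subgroup of `G` is `p^e`-isobicyclic. -/
theorem sylow_of_isobicyclic_isIsobicyclic
    {G : Type*} [Group G] [Finite G] (n : ℕ) (hn : 0 < n) (x y : G)
    (hx : orderOf x = n) (hy : orderOf y = n)
    (hprod : (↑(Subgroup.zpowers x) * ↑(Subgroup.zpowers y) : Set G) = Set.univ)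
    (hinter : Subgroup.zpowers x ⊓ Subgroup.zpowers y = ⊥)
    (α : G ≃* G) (hαx : α x = y) (hαy : α y = x)
    (p e : ℕ) (hp : p.Prime) (hpn : p ∣ n)
    (hpe : p ^ e ∣ n) (hpe' : ¬ p ^ (e + 1) ∣ n)
    (P : Sylow p G) :
    ∃ a b : (P : Subgroup G),
      orderOf a = p ^ e ∧ orderOf b = p ^ e ∧
      (↑(Subgroup.zpowers a) * ↑(Subgroup.zpowers b) : Set (P : Subgroup G)) = Set.univ ∧
      Subgroup.zpowers a ⊓ Subgroup.zpowers b = ⊥ ∧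
      ∃ β : (P : Subgroup G) ≃* (P : Subgroup G), β a = b ∧ β b = a := by
  haveI : Fact p.Prime := ⟨hp⟩
  have hn0 : n ≠ 0 := hn.ne'
  set q := n / p ^ e with hqdef
  have hq : p ^ e * q = n := Nat.mul_div_cancel' hpe
  have hq0 : 0 < q := Nat.div_pos (Nat.le_of_dvd hn hpe) (pow_pos hp.pos e)
  have hqdvd : q ∣ n := ⟨p ^ e, by rw [← hq, mul_comm]⟩
  set a0 := x ^ q with ha0def
  set b0 := y ^ q with hb0def
  -- orders of a0 and b0
  have hndiv : n / q = p ^ e := Nat.div_eq_of_eq_mul_left hq0 hq.symm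
  have hoa : orderOf a0 = p ^ e := by
    rw [ha0def, orderOf_pow, hx, Nat.gcd_eq_right hqdvd, hndiv]
  have hob : orderOf b0 = p ^ e := by
    rw [hb0def, orderOf_pow, hy, Nat.gcd_eq_right hqdvd, hndiv]
  have ha0x : a0 ∈ Subgroup.zpowers x := ⟨(q : ℤ), by simp [ha0def]⟩
  have hb0y : b0 ∈ Subgroup.zpowers y := ⟨(q : ℤ), by simp [hb0def]⟩
  have hinf0 : Subgroup.zpowers a0 ⊓ Subgroup.zpowers b0 = ⊥ := by
    apply le_bot_iff.mp
    calc Subgroup.zpowers a0 ⊓ Subgroup.zpowers b0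
        ≤ Subgroup.zpowers x ⊓ Subgroup.zpowers y :=
          inf_le_inf (Subgroup.zpowers_le.mpr ha0x) (Subgroup.zpowers_le.mpr hb0y)
      _ ≤ ⊥ := hinter.le
  have hab0 : α a0 = b0 := by rw [ha0def, map_pow, hαx]
  have hba0 : α b0 = a0 := by rw [hb0def, map_pow, hαy]
  -- cardinality of G
  have hcardG : Nat.card G = n * n := by
    have hsurj : Function.Surjective
        (fun w : Subgroup.zpowers x × Subgroup.zpowers y => ((w.1 : G) * (w.2 : G))) := by
      intro g
      have hg : g ∈ (↑(Subgroup.zpowers x) * ↑(Subgroup.zpowers y) : Set G) := by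
        rw [hprod]; trivial
      obtain ⟨u, hu, v, hv, huv⟩ := Set.mem_mul.mp hg
      exact ⟨(⟨u, hu⟩, ⟨v, hv⟩), huv⟩
    have := Nat.card_eq_of_bijective _ ⟨pair_mul_injective x y hinter, hsurj⟩
    rw [Nat.card_prod, Nat.card_zpowers, Nat.card_zpowers, hx, hy] at this
    exact this.symm
  -- cardinality of every Sylow p-subgroup
  have hfe : n.factorization p = e := by
    have h1 : e ≤ n.factorization p := (Nat.Prime.pow_dvd_iff_le_factorization hp hn0).mp hpe
    have h2 : n.factorization p ≤ e := by
      by_contra hcon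
      push_neg at hcon
      exact hpe' ((Nat.Prime.pow_dvd_iff_le_factorization hp hn0).mpr hcon)
    omega
  have hcardP : ∀ S : Sylow p G, Nat.card (S : Subgroup G) = p ^ e * p ^ e := by
    intro S
    have := Sylow.card_eq_multiplicity S
    rw [hcardG, Nat.factorization_mul hn0 hn0, Finsupp.add_apply, hfe, pow_add] at this
    exact this
  -- find a Sylow subgroup containing both a0 and b0
  have hpga : IsPGroup p (Subgroup.zpowers a0) :=
    IsPGroup.of_card (by rw [Nat.card_zpowers, hoa])
  have hpgb : IsPGroup p (Subgroup.zpowers b0) :=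
    IsPGroup.of_card (by rw [Nat.card_zpowers, hob])
  obtain ⟨Q, hQ⟩ := hpga.exists_le_sylow
  obtain ⟨R, hR⟩ := hpgb.exists_le_sylow
  obtain ⟨g, hg⟩ := MulAction.exists_smul_eq G R Q
  have hgmem : g ∈ (↑(Subgroup.zpowers x) * ↑(Subgroup.zpowers y) : Set G) := by
    rw [hprod]; trivial
  obtain ⟨u, hu, v, hv, huv⟩ := Set.mem_mul.mp hgmem
  rw [SetLike.mem_coe, Subgroup.mem_zpowers_iff] at hu hv
  obtain ⟨s, hs⟩ := hu
  obtain ⟨t, ht⟩ := hv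
  have hb0R : b0 ∈ (R : Subgroup G) := hR (Subgroup.mem_zpowers b0)
  have key : x ^ s * b0 * (x ^ s)⁻¹ ∈ (Q : Subgroup G) := by
    rw [← hg]
    have h3 : MulAut.conj g • b0 ∈ MulAut.conj g • (R : Subgroup G) :=
      Subgroup.smul_mem_pointwise_smul b0 (MulAut.conj g) (R : Subgroup G) hb0R
    have h4 : MulAut.conj g • b0 = x ^ s * b0 * (x ^ s)⁻¹ := by
      have : MulAut.conj g • b0 = g * b0 * g⁻¹ := rfl
      rw [this, ← huv, ← hs, ← ht, hb0def]
      group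
    rw [h4] at h3
    exact h3
  set P' : Sylow p G := (x ^ s)⁻¹ • Q with hP'def
  have hcoeP' : (P' : Subgroup G) = MulAut.conj (x ^ s)⁻¹ • (Q : Subgroup G) := rfl
  have ha0P' : a0 ∈ (P' : Subgroup G) := by
    rw [hcoeP']
    have h5 : MulAut.conj (x ^ s)⁻¹ • a0 ∈ MulAut.conj (x ^ s)⁻¹ • (Q : Subgroup G) :=
      Subgroup.smul_mem_pointwise_smul a0 _ _ (hQ (Subgroup.mem_zpowers a0))
    have h6 : MulAut.conj (x ^ s)⁻¹ • a0 = a0 := by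
      have : MulAut.conj (x ^ s)⁻¹ • a0 = (x ^ s)⁻¹ * a0 * ((x ^ s)⁻¹)⁻¹ := rfl
      rw [this, ha0def]
      group
    rwa [h6] at h5
  have hb0P' : b0 ∈ (P' : Subgroup G) := by
    rw [hcoeP']
    have h5 : MulAut.conj (x ^ s)⁻¹ • (x ^ s * b0 * (x ^ s)⁻¹) ∈
        MulAut.conj (x ^ s)⁻¹ • (Q : Subgroup G) :=
      Subgroup.smul_mem_pointwise_smul _ _ _ key
    have h6 : MulAut.conj (x ^ s)⁻¹ • (x ^ s * b0 * (x ^ s)⁻¹) = b0 := by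
      have : MulAut.conj (x ^ s)⁻¹ • (x ^ s * b0 * (x ^ s)⁻¹)
          = (x ^ s)⁻¹ * (x ^ s * b0 * (x ^ s)⁻¹) * ((x ^ s)⁻¹)⁻¹ := rfl
      rw [this]
      group
    rwa [h6] at h5
  -- transport to the given Sylow subgroup P
  obtain ⟨h, hh⟩ := MulAction.exists_smul_eq G P' P
  set aP := h * a0 * h⁻¹ with haPdef
  set bP := h * b0 * h⁻¹ with hbPdef
  have hconja : (MulAut.conj h) a0 = aP := rfl
  have hconjb : (MulAut.conj h) b0 = bP := rfl
  have haP : aP ∈ (P : Subgroup G) := by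
    rw [← hh]
    exact Subgroup.smul_mem_pointwise_smul a0 (MulAut.conj h) _ ha0P'
  have hbP : bP ∈ (P : Subgroup G) := by
    rw [← hh]
    exact Subgroup.smul_mem_pointwise_smul b0 (MulAut.conj h) _ hb0P'
  have hordaP : orderOf aP = p ^ e := by
    rw [← hconja, MulEquiv.orderOf_eq, hoa]
  have hordbP : orderOf bP = p ^ e := by
    rw [← hconjb, MulEquiv.orderOf_eq, hob]
  have hza : Subgroup.zpowers aP
      = Subgroup.map (MulAut.conj h).toMonoidHom (Subgroup.zpowers a0) := by
    rw [MonoidHom.map_zpowers]; rfl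
  have hzb : Subgroup.zpowers bP
      = Subgroup.map (MulAut.conj h).toMonoidHom (Subgroup.zpowers b0) := by
    rw [MonoidHom.map_zpowers]; rfl
  have hinfP : Subgroup.zpowers aP ⊓ Subgroup.zpowers bP = ⊥ := by
    rw [hza, hzb, ← Subgroup.map_inf _ _ _ (MulAut.conj h).injective, hinf0, Subgroup.map_bot]
  set αP : G ≃* G := ((MulAut.conj h⁻¹ : MulAut G) : G ≃* G).trans
      (α.trans ((MulAut.conj h : MulAut G) : G ≃* G)) with hαPdef
  have hαPa : αP aP = bP := by
    have e1 : (MulAut.conj h⁻¹) aP = a0 := by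
      rw [MulAut.conj_apply, haPdef]
      group
    show (MulAut.conj h) (α ((MulAut.conj h⁻¹) aP)) = bP
    rw [e1, hab0, hconjb]
  have hαPb : αP bP = aP := by
    have e1 : (MulAut.conj h⁻¹) bP = b0 := by
      rw [MulAut.conj_apply, hbPdef]
      group
    show (MulAut.conj h) (α ((MulAut.conj h⁻¹) bP)) = aP
    rw [e1, hba0, hconja]
  exact aux_main (P : Subgroup G) (hcardP P) haP hbP hordaP hordbP hinfP αP hαPa hαPb
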